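/- Let A: S^d → R^m be a linear operator on symmetric d×d matrices satisfying the restricted isometry property of order r+2r' with constant δ. Let V ∈ R^{d×r'} have orthonormal columns. Then for every symmetric matrix Z of rank at most r, ‖[(I − A*A)(Z)] V‖_F ≤ δ ‖Z‖_F. -/

import Mathlib

open scoped BigOperators
open Matrix
open scoped RealInnerProductSpace

noncomputable def frobNorm {d₁ d₂ : ℕ} (A : Matrix (Fin d₁) (Fin d₂) ℝ) : ℝ :=
  Real.sqrt (∑ i, ∑ j, A i j ^ 2)

noncomputable def vecNorm {m : ℕ} (y : Fin m → ℝ) : ℝ :=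
  Real.sqrt (∑ i, y i ^ 2)

noncomputable def specNorm {d₁ d₂ : ℕ} (A : Matrix (Fin d₁) (Fin d₂) ℝ) : ℝ :=
  ‖LinearMap.toContinuousLinearMap (Matrix.toEuclideanLin A)‖

noncomputable def tinner {d : ℕ} (A B : Matrix (Fin d) (Fin d) ℝ) : ℝ :=
  (A * Bᵀ).trace

noncomputable def sigmaMin {d₁ d₂ : ℕ} (A : Matrix (Fin d₁) (Fin d₂) ℝ) : ℝ :=
  sInf {s : ℝ | 0 < s ∧ ∃ i, s ^ 2 = (Matrix.isHermitian_conjTranspose_mul_self A).eigenvalues i}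

noncomputable def projPerp {d : ℕ} (w : Fin d → ℝ) (Z : Matrix (Fin d) (Fin d) ℝ) :
    Matrix (Fin d) (Fin d) ℝ :=
  Z - tinner (Matrix.vecMulVec w w) Z • Matrix.vecMulVec w w

/-! ### Auxiliary lemmas -/

noncomputable def toE {d₁ d₂ : ℕ} (A : Matrix (Fin d₁) (Fin d₂) ℝ) :
    EuclideanSpace ℝ (Fin d₁ × Fin d₂) :=
  WithLp.toLp 2 (fun p : Fin d₁ × Fin d₂ => A p.1 p.2)

lemma toE_add {d₁ d₂ : ℕ} (A B : Matrix (Fin d₁) (Fin d₂) ℝ) :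
    toE (A + B) = toE A + toE B := rfl

lemma toE_sub {d₁ d₂ : ℕ} (A B : Matrix (Fin d₁) (Fin d₂) ℝ) :
    toE (A - B) = toE A - toE B := rfl

lemma toE_smul {d₁ d₂ : ℕ} (c : ℝ) (A : Matrix (Fin d₁) (Fin d₂) ℝ) :
    toE (c • A) = c • toE A := rfl

lemma frob_eq_norm {d₁ d₂ : ℕ} (A : Matrix (Fin d₁) (Fin d₂) ℝ) :
    frobNorm A = ‖toE A‖ := by
  rw [EuclideanSpace.norm_eq, frobNorm]
  congr 1
  rw [Fintype.sum_prod_type]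
  simp [toE, Real.norm_eq_abs, sq_abs]

lemma tinner_eq_sum {d : ℕ} (A B : Matrix (Fin d) (Fin d) ℝ) :
    tinner A B = ∑ i, ∑ j, A i j * B i j := by
  simp [tinner, Matrix.trace, Matrix.diag, Matrix.mul_apply]

lemma tinner_eq_inner {d : ℕ} (A B : Matrix (Fin d) (Fin d) ℝ) :
    tinner A B = ⟪toE A, toE B⟫ := by
  rw [tinner_eq_sum, PiLp.inner_apply, Fintype.sum_prod_type]
  simp [toE, mul_comm]

lemma frob_nonneg {d₁ d₂ : ℕ} (A : Matrix (Fin d₁) (Fin d₂) ℝ) : 0 ≤ frobNorm A :=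
  Real.sqrt_nonneg _

lemma frob_add_le {d₁ d₂ : ℕ} (A B : Matrix (Fin d₁) (Fin d₂) ℝ) :
    frobNorm (A + B) ≤ frobNorm A + frobNorm B := by
  rw [frob_eq_norm, frob_eq_norm, frob_eq_norm, toE_add]
  exact norm_add_le _ _

lemma frob_smul {d₁ d₂ : ℕ} (c : ℝ) (A : Matrix (Fin d₁) (Fin d₂) ℝ) :
    frobNorm (c • A) = |c| * frobNorm A := by
  rw [frob_eq_norm, frob_eq_norm, toE_smul, norm_smul, Real.norm_eq_abs]

lemma rank_add_le' {d : ℕ} (A B : Matrix (Fin d) (Fin d) ℝ) :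
    (A + B).rank ≤ A.rank + B.rank := by
  rw [Matrix.rank, Matrix.mulVecLin_add]
  refine le_trans (Submodule.finrank_mono ?_)
    (Submodule.finrank_add_le_finrank_add_finrank _ _)
  rintro x ⟨y, rfl⟩
  exact Submodule.add_mem_sup (LinearMap.mem_range_self _ y) (LinearMap.mem_range_self _ y)

lemma rank_smul_le {d : ℕ} (c : ℝ) (A : Matrix (Fin d) (Fin d) ℝ) :
    (c • A).rank ≤ A.rank := by
  have h : c • A = (c • (1 : Matrix (Fin d) (Fin d) ℝ)) * A := by
    rw [Matrix.smul_mul, Matrix.one_mul]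
  rw [h]
  exact Matrix.rank_mul_le_right _ _

lemma tinner_sub_left {d : ℕ} (A B C : Matrix (Fin d) (Fin d) ℝ) :
    tinner (A - B) C = tinner A C - tinner B C := by
  simp [tinner, Matrix.sub_mul]

lemma tinner_smul_left {d : ℕ} (c : ℝ) (A B : Matrix (Fin d) (Fin d) ℝ) :
    tinner (c • A) B = c * tinner A B := by
  simp [tinner, Matrix.smul_mul]

lemma frob_sq_trace {d₁ d₂ : ℕ} (A : Matrix (Fin d₁) (Fin d₂) ℝ) :
    frobNorm A ^ 2 = (A * Aᵀ).trace := by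
  rw [frobNorm, Real.sq_sqrt (by positivity)]
  simp [Matrix.trace, Matrix.diag, Matrix.mul_apply, sq]

lemma tinner_right_symm {d : ℕ} (B C : Matrix (Fin d) (Fin d) ℝ) (hC : Cᵀ = C) :
    tinner B C = (B * C).trace := by rw [tinner, hC]

section
variable {d r' : ℕ} (B : Matrix (Fin d) (Fin d) ℝ) (V : Matrix (Fin d) (Fin r') ℝ)

lemma trace_BPB (hBs : Bᵀ = B) :
    (B * ((V * Vᵀ) * B)).trace = ((B * V) * (B * V)ᵀ).trace := by
  rw [Matrix.transpose_mul, hBs, ← Matrix.mul_assoc, ← Matrix.mul_assoc,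
    Matrix.mul_assoc (B * V)]

lemma trace_BBP (hBs : Bᵀ = B) :
    (B * (B * (V * Vᵀ))).trace = ((B * V) * (B * V)ᵀ).trace := by
  rw [Matrix.transpose_mul, hBs, ← Matrix.mul_assoc, ← Matrix.mul_assoc,
    Matrix.trace_mul_comm (B * B * V) Vᵀ, Matrix.trace_mul_comm (B * V) (Vᵀ * B)]
  congr 1
  simp only [Matrix.mul_assoc]

lemma key1 (hBs : Bᵀ = B) (hYs : ((2⁻¹ : ℝ) • (B * (V * Vᵀ) + (V * Vᵀ) * B))ᵀ
      = (2⁻¹ : ℝ) • (B * (V * Vᵀ) + (V * Vᵀ) * B)) :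
    tinner B ((2⁻¹ : ℝ) • (B * (V * Vᵀ) + (V * Vᵀ) * B)) = frobNorm (B * V) ^ 2 := by
  rw [tinner_right_symm _ _ hYs, Matrix.mul_smul, Matrix.mul_add, Matrix.trace_smul,
    Matrix.trace_add, trace_BBP B V hBs, trace_BPB B V hBs,
    frob_sq_trace, smul_eq_mul]
  ring

lemma key2 (hBs : Bᵀ = B) (hV : Vᵀ * V = 1) :
    frobNorm (B * (V * Vᵀ)) = frobNorm (B * V) := by
  have h1 : frobNorm (B * (V * Vᵀ)) ^ 2 = frobNorm (B * V) ^ 2 := by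
    rw [frob_sq_trace, frob_sq_trace, Matrix.transpose_mul, Matrix.transpose_mul,
      Matrix.transpose_mul, Matrix.transpose_transpose, hBs]
    congr 1
    simp only [Matrix.mul_assoc]
    rw [← Matrix.mul_assoc Vᵀ V (Vᵀ * B), hV, Matrix.one_mul]
  rw [← Real.sqrt_sq (frob_nonneg (B * (V * Vᵀ))), ← Real.sqrt_sq (frob_nonneg (B * V)), h1]

lemma key3 (hBs : Bᵀ = B) (hV : Vᵀ * V = 1) :
    frobNorm ((V * Vᵀ) * B) = frobNorm (B * V) := by
  have h1 : frobNorm ((V * Vᵀ) * B) ^ 2 = frobNorm (B * V) ^ 2 := by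
    rw [frob_sq_trace, frob_sq_trace, Matrix.transpose_mul, Matrix.transpose_mul,
      Matrix.transpose_mul, Matrix.transpose_transpose, hBs]
    simp only [Matrix.mul_assoc]
    rw [Matrix.trace_mul_comm V (Vᵀ * (B * (B * (V * Vᵀ))))]
    simp only [Matrix.mul_assoc]
    rw [hV, Matrix.mul_one, Matrix.trace_mul_comm Vᵀ (B * (B * V)),
      show B * (B * V) * Vᵀ = B * (B * (V * Vᵀ)) by simp only [Matrix.mul_assoc],
      Matrix.trace_mul_comm B (B * (V * Vᵀ))]
    congr 1
    simp only [Matrix.mul_assoc]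
  rw [← Real.sqrt_sq (frob_nonneg ((V * Vᵀ) * B)), ← Real.sqrt_sq (frob_nonneg (B * V)), h1]
end

lemma scaling_lemma (δ t z : ℝ) (hδ : 0 ≤ δ) (ht : 0 < t) (hz : 0 < z)
    (h : ∀ c : ℝ, c * t ^ 2 ≤ δ * (c ^ 2 * z ^ 2 + t ^ 2) / 2) : t ≤ δ * z := by
  have h1 := h (t / z)
  have e : (t / z) ^ 2 * z ^ 2 = t ^ 2 := by field_simp
  rw [e] at h1
  have h2 : t / z * t ^ 2 = t ^ 3 / z := by ring
  rw [h2] at h1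
  have h3 : t ^ 3 ≤ δ * t ^ 2 * z := by
    rw [div_le_iff₀ hz] at h1
    nlinarith
  nlinarith [mul_pos ht ht]

theorem statement1 {d m r r' : ℕ} (δ : ℝ) (hδ : 0 ≤ δ)
    (𝒜 : Matrix (Fin d) (Fin d) ℝ →ₗ[ℝ] (Fin m → ℝ))
    (𝒜s : (Fin m → ℝ) →ₗ[ℝ] Matrix (Fin d) (Fin d) ℝ)
    (hsym : ∀ y, (𝒜s y).IsSymm)
    (hadj : ∀ (y : Fin m → ℝ) (Z : Matrix (Fin d) (Fin d) ℝ), Z.IsSymm →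
      tinner (𝒜s y) Z = ∑ i, y i * 𝒜 Z i)
    (hRIP : ∀ Z : Matrix (Fin d) (Fin d) ℝ, Z.IsSymm → Z.rank ≤ r + 2 * r' →
      (1 - δ) * frobNorm Z ^ 2 ≤ ∑ i, 𝒜 Z i ^ 2 ∧
        ∑ i, 𝒜 Z i ^ 2 ≤ (1 + δ) * frobNorm Z ^ 2)
    (V : Matrix (Fin d) (Fin r') ℝ) (hV : Vᵀ * V = 1)
    (Z : Matrix (Fin d) (Fin d) ℝ) (hZ : Z.IsSymm) (hr : Z.rank ≤ r) :
    frobNorm ((Z - 𝒜s (𝒜 Z)) * V) ≤ δ * frobNorm Z := by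
  -- cross lemma
  have hcross : ∀ X Y : Matrix (Fin d) (Fin d) ℝ, X.IsSymm → Y.IsSymm →
      X.rank ≤ r → Y.rank ≤ 2 * r' →
      tinner X Y - ∑ i, 𝒜 X i * 𝒜 Y i
        ≤ δ * (frobNorm X ^ 2 + frobNorm Y ^ 2) / 2 := by
    intro X Y hXs hYs hXr hYr
    have hrankp : (X + Y).rank ≤ r + 2 * r' :=
      le_trans (rank_add_le' X Y) (add_le_add hXr hYr)
    have hrankm : (X - Y).rank ≤ r + 2 * r' := by
      have hXY : X - Y = X + (-1 : ℝ) • Y := by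
        rw [neg_one_smul, ← sub_eq_add_neg]
      rw [hXY]
      exact le_trans (rank_add_le' _ _)
        (add_le_add hXr (le_trans (rank_smul_le _ _) hYr))
    have hhp := hRIP (X + Y) (hXs.add hYs) hrankp
    have hhm := hRIP (X - Y) (hXs.sub hYs) hrankm
    have eep : frobNorm (X + Y) ^ 2
        = frobNorm X ^ 2 + 2 * tinner X Y + frobNorm Y ^ 2 := by
      rw [frob_eq_norm, frob_eq_norm, frob_eq_norm, toE_add, tinner_eq_inner,
        norm_add_sq_real]
    have eem : frobNorm (X - Y) ^ 2
        = frobNorm X ^ 2 - 2 * tinner X Y + frobNorm Y ^ 2 := by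
      rw [frob_eq_norm, frob_eq_norm, frob_eq_norm, toE_sub, tinner_eq_inner,
        norm_sub_sq_real]
    have ssp : ∑ i, 𝒜 (X + Y) i ^ 2
        = ∑ i, 𝒜 X i ^ 2 + 2 * ∑ i, 𝒜 X i * 𝒜 Y i + ∑ i, 𝒜 Y i ^ 2 := by
      simp only [map_add, Pi.add_apply, add_sq]
      rw [Finset.sum_add_distrib, Finset.sum_add_distrib, Finset.mul_sum]
      ring
    have ssm : ∑ i, 𝒜 (X - Y) i ^ 2
        = ∑ i, 𝒜 X i ^ 2 - 2 * ∑ i, 𝒜 X i * 𝒜 Y i + ∑ i, 𝒜 Y i ^ 2 := by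
      simp only [map_sub, Pi.sub_apply, sub_sq]
      rw [Finset.sum_add_distrib, Finset.sum_sub_distrib, Finset.mul_sum]
      ring
    obtain ⟨h1, h2⟩ := hhp
    obtain ⟨h3, h4⟩ := hhm
    rw [eep, ssp] at h1 h2
    rw [eem, ssm] at h3 h4
    nlinarith [frob_nonneg X, frob_nonneg Y]
  -- notation
  have hBs : (Z - 𝒜s (𝒜 Z))ᵀ = Z - 𝒜s (𝒜 Z) := (hZ.sub (hsym _)).eq
  have hYs : ((2⁻¹ : ℝ) • ((Z - 𝒜s (𝒜 Z)) * (V * Vᵀ) + (V * Vᵀ) * (Z - 𝒜s (𝒜 Z))))ᵀ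
      = (2⁻¹ : ℝ) • ((Z - 𝒜s (𝒜 Z)) * (V * Vᵀ) + (V * Vᵀ) * (Z - 𝒜s (𝒜 Z))) := by
    simp only [Matrix.transpose_smul, Matrix.transpose_add, Matrix.transpose_mul,
      Matrix.transpose_transpose, hBs]
    rw [add_comm]
  have hYsymm : ((2⁻¹ : ℝ) • ((Z - 𝒜s (𝒜 Z)) * (V * Vᵀ)
      + (V * Vᵀ) * (Z - 𝒜s (𝒜 Z)))).IsSymm := hYs
  have hYr : ((2⁻¹ : ℝ) • ((Z - 𝒜s (𝒜 Z)) * (V * Vᵀ)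
      + (V * Vᵀ) * (Z - 𝒜s (𝒜 Z)))).rank ≤ 2 * r' := by
    refine le_trans (rank_smul_le _ _) (le_trans (rank_add_le' _ _) ?_)
    have h1 : ((Z - 𝒜s (𝒜 Z)) * (V * Vᵀ)).rank ≤ r' := by
      rw [← Matrix.mul_assoc]
      exact le_trans (Matrix.rank_mul_le_right _ _)
        (le_trans (Matrix.rank_le_card_height _) (by simp))
    have h2 : ((V * Vᵀ) * (Z - 𝒜s (𝒜 Z))).rank ≤ r' := by
      rw [Matrix.mul_assoc]
      exact le_trans (Matrix.rank_mul_le_left _ _)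
        (le_trans (Matrix.rank_le_card_width _) (by simp))
    omega
  have hkey := key1 (Z - 𝒜s (𝒜 Z)) V hBs hYs
  rw [tinner_sub_left, hadj _ _ hYsymm] at hkey
  -- frobNorm Y ≤ frobNorm (B V)
  have hYle : frobNorm ((2⁻¹ : ℝ) • ((Z - 𝒜s (𝒜 Z)) * (V * Vᵀ)
      + (V * Vᵀ) * (Z - 𝒜s (𝒜 Z)))) ≤ frobNorm ((Z - 𝒜s (𝒜 Z)) * V) := by
    rw [frob_smul, abs_of_nonneg (by norm_num : (0:ℝ) ≤ 2⁻¹)]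
    have h := frob_add_le ((Z - 𝒜s (𝒜 Z)) * (V * Vᵀ)) ((V * Vᵀ) * (Z - 𝒜s (𝒜 Z)))
    rw [key2 _ _ hBs hV, key3 _ _ hBs hV] at h
    linarith
  -- scaled cross bound
  have hc : ∀ c : ℝ, c * frobNorm ((Z - 𝒜s (𝒜 Z)) * V) ^ 2
      ≤ δ * (c ^ 2 * frobNorm Z ^ 2 + frobNorm ((Z - 𝒜s (𝒜 Z)) * V) ^ 2) / 2 := by
    intro c
    have hcs : (c • Z).IsSymm := hZ.smul c
    have hcr : (c • Z).rank ≤ r := le_trans (rank_smul_le c Z) hr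
    have h := hcross (c • Z) _ hcs hYsymm hcr hYr
    rw [tinner_smul_left] at h
    have hAc : ∑ i, 𝒜 (c • Z) i * 𝒜 ((2⁻¹ : ℝ) • ((Z - 𝒜s (𝒜 Z)) * (V * Vᵀ)
        + (V * Vᵀ) * (Z - 𝒜s (𝒜 Z)))) i
        = c * ∑ i, 𝒜 Z i * 𝒜 ((2⁻¹ : ℝ) • ((Z - 𝒜s (𝒜 Z)) * (V * Vᵀ)
        + (V * Vᵀ) * (Z - 𝒜s (𝒜 Z)))) i := by
      rw [_root_.map_smul, Finset.mul_sum]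
      congr 1; funext i
      simp [mul_assoc]
    rw [hAc] at h
    have hfs : frobNorm (c • Z) ^ 2 = c ^ 2 * frobNorm Z ^ 2 := by
      rw [frob_smul, mul_pow, sq_abs]
    rw [hfs] at h
    have hY2 : frobNorm ((2⁻¹ : ℝ) • ((Z - 𝒜s (𝒜 Z)) * (V * Vᵀ)
        + (V * Vᵀ) * (Z - 𝒜s (𝒜 Z)))) ^ 2 ≤ frobNorm ((Z - 𝒜s (𝒜 Z)) * V) ^ 2 :=
      pow_le_pow_left₀ (frob_nonneg _) hYle 2
    have hck := congrArg (fun x => c * x) hkey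
    nlinarith [mul_le_mul_of_nonneg_left hY2 hδ, hck, h]
  -- conclude
  rcases eq_or_lt_of_le (frob_nonneg ((Z - 𝒜s (𝒜 Z)) * V)) with h0 | hpos
  · rw [← h0]
    exact mul_nonneg hδ (frob_nonneg Z)
  · rcases eq_or_lt_of_le (frob_nonneg Z) with hz0 | hzpos
    · exfalso
      have hZ0 : Z = 0 := by
        have hsum0 : ∑ i, ∑ j, Z i j ^ 2 = 0 := by
          have h := hz0.symm
          rw [frobNorm] at h
          exact (Real.sqrt_eq_zero (by positivity)).mp h
        ext i j
        have h1 : ∀ i ∈ Finset.univ, ∑ j, Z i j ^ 2 = 0 := by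
          intro i _
          have := (Finset.sum_eq_zero_iff_of_nonneg (fun i _ => by positivity)).mp hsum0
          exact this i (Finset.mem_univ i)
        have h2 := (Finset.sum_eq_zero_iff_of_nonneg (fun j _ => by positivity)).mp
          (h1 i (Finset.mem_univ i)) j (Finset.mem_univ j)
        have : Z i j = 0 := by nlinarith [sq_nonneg (Z i j)]
        simpa using this
      rw [hZ0] at hpos
      simp only [map_zero, sub_zero, Matrix.zero_mul] at hpos
      rw [show frobNorm (0 : Matrix (Fin d) (Fin r') ℝ) = 0 by
        simp [frobNorm]] at hpos
      exact lt_irrefl 0 hpos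
    · exact scaling_lemma δ _ _ hδ hpos hzpos hc
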